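/- arXiv:1606.08606 — 10 statements merged into one kernel-verified Lean document; each statement's English description precedes it below -/
import Mathlib

section
/- Condition (Y2) implies condition (Y3): if for every ε>0 there exist s₀, n₀ such that B_{s+n} < ε(B_s + ⋯ + B_{s+n}) for all n ≥ n₀ and s ≥ s₀, then for every ε₁ > 0 and every m ∈ ℤ₊ there exists N such that B_{s+n-m} + ⋯ + B_{s+n} < ε₁(B_s + ⋯ + B_{s+n-m-1} + ⋯ + B_{s+n}) for all n ≥ N and s ≥ 1. -/
open Finset

/-- (Y2) implies (Y3) (modified form): if for every ε>0 there exist s₀, n₀ such that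
B_{s+n} < ε·(B_s + ⋯ + B_{s+n}) for n ≥ n₀, s ≥ s₀, then for every ε₁>0 and every m
there is N such that B_{s+n-m} + ⋯ + B_{s+n} < ε₁·(B_s + ⋯ + B_{s+n}) for n ≥ N, s ≥ 1. -/
theorem stmt0 (B : ℕ → ℝ) (hBpos : ∀ k, 0 < B k)
    (hY2 : ∀ ε : ℝ, 0 < ε → ∃ s₀ n₀ : ℕ, ∀ n ≥ n₀, ∀ s ≥ s₀,
      B (s + n) < ε * ∑ k ∈ Finset.Icc s (s + n), B k) :
    ∀ ε₁ : ℝ, 0 < ε₁ → ∀ m : ℕ, ∃ N : ℕ, ∀ n ≥ N, ∀ s ≥ 1,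
      (∑ k ∈ Finset.Icc (s + n - m) (s + n), B k)
        < ε₁ * ∑ k ∈ Finset.Icc s (s + n), B k := by
  intro ε₁ hε₁ m
  have hεpos : (0:ℝ) < ε₁ / (m + 1) := by positivity
  obtain ⟨s₀, n₀, hY⟩ := hY2 (ε₁ / (m + 1)) hεpos
  refine ⟨n₀ + m + s₀ + 1, fun n hn s hs => ?_⟩
  set T := ∑ k ∈ Finset.Icc s (s + n), B k with hT
  have hTpos : 0 < T := by
    apply Finset.sum_pos (fun k _ => hBpos k)
    exact Finset.nonempty_Icc.2 (by omega)
  -- each tail term is small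
  have key : ∀ k ∈ Finset.Icc (s + n - m) (s + n), B k < (ε₁ / (m + 1)) * T := by
    intro k hk
    simp only [Finset.mem_Icc] at hk
    set s' := max s s₀ with hs'
    have hs's : s ≤ s' := le_max_left _ _
    have hs'0 : s₀ ≤ s' := le_max_right _ _
    have hks' : s' + n₀ ≤ k := by
      rcases le_total s₀ s with h | h
      · have : s' = s := by omega
        omega
      · have : s' = s₀ := by omega
        omega
    have hk' : k = s' + (k - s') := by omega
    have h := hY (k - s') (by omega) s' hs'0
    rw [← hk'] at h
    refine lt_of_lt_of_le h ?_
    apply mul_le_mul_of_nonneg_left _ (le_of_lt hεpos)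
    apply Finset.sum_le_sum_of_subset_of_nonneg
    · apply Finset.Icc_subset_Icc hs's (by omega)
    · exact fun i _ _ => (hBpos i).le
  have hcard : (Finset.Icc (s + n - m) (s + n)).card = m + 1 := by
    rw [Nat.card_Icc]; omega
  have hne : (Finset.Icc (s + n - m) (s + n)).Nonempty :=
    Finset.nonempty_Icc.2 (by omega)
  calc (∑ k ∈ Finset.Icc (s + n - m) (s + n), B k)
      < ∑ _k ∈ Finset.Icc (s + n - m) (s + n), (ε₁ / (m + 1)) * T :=
        Finset.sum_lt_sum_of_nonempty hne key
    _ = (m + 1 : ℝ) * ((ε₁ / (m + 1)) * T) := by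
        rw [Finset.sum_const, hcard, nsmul_eq_mul]; push_cast; ring
    _ = ε₁ * T := by field_simp
end

section
/- Conditions (Y2) and (Y4) are equivalent for sequences of positive reals: (∀ε>0 ∃s₀,n₀: B_{s+n} < ε(B_s+⋯+B_{s+n}) for n≥n₀, s≥s₀) if and only if (∀ε>0 ∃m,n₀,s₀: B_{s+n} < ε(B_{s+n-m}+⋯+B_{s+n-1}) for n≥n₀, s≥s₀). -/
open Finset

/-- (Y2) and (Y4) are equivalent: for a sequence of positive reals,
(∀ε>0 ∃s₀,n₀: B_{s+n} < ε(B_s+⋯+B_{s+n}) for n≥n₀, s≥s₀) iff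
(∀ε>0 ∃m,n₀,s₀: B_{s+n} < ε(B_{s+n-m}+⋯+B_{s+n-1}) for n≥n₀, s≥s₀). -/
theorem stmt1 (B : ℕ → ℝ) (hBpos : ∀ k, 0 < B k) :
    (∀ ε : ℝ, 0 < ε → ∃ s₀ n₀ : ℕ, ∀ n ≥ n₀, ∀ s ≥ s₀,
      B (s + n) < ε * ∑ k ∈ Finset.Icc s (s + n), B k) ↔
    (∀ ε : ℝ, 0 < ε → ∃ m n₀ s₀ : ℕ, ∀ n ≥ n₀, ∀ s ≥ s₀,
      B (s + n) < ε * ∑ k ∈ Finset.Icc (s + n - m) (s + n - 1), B k) := by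
  constructor
  · -- (Y2) → (Y4)
    intro h ε hε
    have h1 : (0:ℝ) < 1 + ε := by linarith
    obtain ⟨s₀, n₀, H⟩ := h (ε / (1 + ε)) (div_pos hε h1)
    refine ⟨max n₀ 1, max n₀ 1, s₀, ?_⟩
    intro n hn s hs
    set m := max n₀ 1 with hm
    have hm1 : 1 ≤ m := le_max_right _ _
    have hnm : m ≤ n := hn
    have hs' : s₀ ≤ s + n - m := by omega
    have key := H m (le_max_left _ _) (s + n - m) hs'
    have hEq : s + n - m + m = s + n := by omega
    rw [hEq] at key
    have hsplit : Finset.Icc (s + n - m) (s + n)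
        = insert (s + n) (Finset.Icc (s + n - m) (s + n - 1)) := by
      ext k; simp [Finset.mem_Icc]; omega
    rw [hsplit, Finset.sum_insert (by simp [Finset.mem_Icc]; omega)] at key
    set S := ∑ k ∈ Finset.Icc (s + n - m) (s + n - 1), B k with hS
    have hSpos : 0 < S := Finset.sum_pos (fun k _ => hBpos k)
      (by rw [Finset.nonempty_Icc]; omega)
    have key' : B (s + n) * (1 + ε) < ε * (B (s + n) + S) := by
      rw [div_mul_eq_mul_div, lt_div_iff₀ h1] at key
      linarith [key]
    nlinarith [key', hBpos (s + n)]
  · -- (Y4) → (Y2)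
    intro h ε hε
    obtain ⟨m, n₀, s₀, H⟩ := h ε hε
    refine ⟨s₀, max n₀ m, ?_⟩
    intro n hn s hs
    have key := H n (le_trans (le_max_left _ _) hn) s hs
    refine key.trans_le (mul_le_mul_of_nonneg_left ?_ hε.le)
    apply Finset.sum_le_sum_of_subset_of_nonneg
    · intro k hk
      simp only [Finset.mem_Icc] at *
      omega
    · intro k _ _
      exact (hBpos k).le
end

section
/- If β_k := (log B_k)/k is positive and nondecreasing with β_k ↗ β < ∞, then for all s and n, B_{s+n}/(B_s + ⋯ + B_{s+n}) > (e^{β_1} - 1)/e^{β} > 0; in particular condition (Y) fails. -/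
open Finset Filter Real

/-- If β_k = (log B_k)/k is positive and nondecreasing with β_k ↗ β < ∞, then
for all s ≥ 1 and all n, B_{s+n}/(B_s + ⋯ + B_{s+n}) > (e^{β_1}-1)/e^{β} > 0;
in particular condition (Y) fails. -/
theorem stmt4 (B β : ℕ → ℝ) (βlim : ℝ)
    (hB : ∀ k ≥ 1, B k = Real.exp (k * β k))
    (hβpos : ∀ k ≥ 1, 0 < β k)
    (hβmono : ∀ k ≥ 1, β k ≤ β (k + 1))
    (hβlim : Filter.Tendsto β Filter.atTop (nhds βlim)) :
    (0 < (Real.exp (β 1) - 1) / Real.exp βlim) ∧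
    (∀ s ≥ 1, ∀ n : ℕ,
      B (s + n) / ∑ k ∈ Finset.Icc s (s + n), B k
        > (Real.exp (β 1) - 1) / Real.exp βlim) ∧
    ¬ (∀ ε : ℝ, 0 < ε → ∃ N : ℕ, ∀ n ≥ N, ∀ s ≥ 1,
        B (s + n) / ∑ k ∈ Finset.Icc s (s + n), B k < ε) := by
  have mono : ∀ m k, 1 ≤ k → k ≤ m → β k ≤ β m := by
    intro m
    induction m with
    | zero => intro k hk hkm; omega
    | succ m ih =>
      intro k hk hkm
      rcases Nat.lt_or_ge k (m + 1) with h | h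
      · exact le_trans (ih k hk (by omega)) (hβmono m (by omega))
      · have : k = m + 1 := by omega
        subst this; exact le_rfl
  have hle : ∀ k, 1 ≤ k → β k ≤ βlim := by
    intro k hk
    exact ge_of_tendsto hβlim
      (Filter.eventually_atTop.2 ⟨k, fun m hm => mono m k hk hm⟩)
  have h1 : 0 < β 1 := hβpos 1 le_rfl
  have hexp1 : (1 : ℝ) < Real.exp (β 1) := by
    calc (1:ℝ) = Real.exp 0 := Real.exp_zero.symm
    _ < Real.exp (β 1) := Real.exp_lt_exp.2 h1
  have hc : 0 < (Real.exp (β 1) - 1) / Real.exp βlim :=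
    div_pos (by linarith) (Real.exp_pos _)
  have main : ∀ s ≥ 1, ∀ n : ℕ,
      B (s + n) / ∑ k ∈ Finset.Icc s (s + n), B k
        > (Real.exp (β 1) - 1) / Real.exp βlim := by
    intro s hs n
    set q := Real.exp (β (s + n)) with hq
    have hsn1 : 1 ≤ s + n := by omega
    have hq1 : 1 < q := by
      calc (1:ℝ) = Real.exp 0 := Real.exp_zero.symm
      _ < q := Real.exp_lt_exp.2 (hβpos _ hsn1)
    have hq0 : 0 < q := by linarith
    have hBk : ∀ k ∈ Finset.Icc s (s + n), B k ≤ q ^ k := by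
      intro k hk
      simp only [Finset.mem_Icc] at hk
      have hk1 : 1 ≤ k := le_trans hs hk.1
      rw [hB k hk1, hq, ← Real.exp_nat_mul]
      apply Real.exp_le_exp.2
      exact mul_le_mul_of_nonneg_left (mono _ k hk1 hk.2) (Nat.cast_nonneg k)
    have hBsn : B (s + n) = q ^ (s + n) := by
      rw [hB _ hsn1, hq, ← Real.exp_nat_mul]
    have hsumpos : 0 < ∑ k ∈ Finset.Icc s (s + n), B k := by
      apply Finset.sum_pos
      · intro k hk
        simp only [Finset.mem_Icc] at hk
        rw [hB k (le_trans hs hk.1)]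
        exact Real.exp_pos _
      · exact ⟨s, Finset.mem_Icc.2 ⟨le_rfl, Nat.le_add_right _ _⟩⟩
    have hgeo : ∑ k ∈ Finset.Icc s (s + n), q ^ k
        = (q ^ (s + n + 1) - q ^ s) / (q - 1) := by
      rw [← Finset.Ico_add_one_right_eq_Icc]
      exact geom_sum_Ico (ne_of_gt hq1) (by omega)
    have hsumlt : ∑ k ∈ Finset.Icc s (s + n), B k < q ^ (s + n) * q / (q - 1) := by
      calc ∑ k ∈ Finset.Icc s (s + n), B k
          ≤ ∑ k ∈ Finset.Icc s (s + n), q ^ k := Finset.sum_le_sum hBk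
      _ = (q ^ (s + n + 1) - q ^ s) / (q - 1) := hgeo
      _ < q ^ (s + n + 1) / (q - 1) := by
          apply div_lt_div_of_pos_right ?_ (by linarith)
          have : 0 < q ^ s := pow_pos hq0 s
          linarith
      _ = q ^ (s + n) * q / (q - 1) := by rw [pow_succ]
    have key : (q - 1) / q < B (s + n) / ∑ k ∈ Finset.Icc s (s + n), B k := by
      rw [div_lt_div_iff₀ hq0 hsumpos, hBsn]
      calc (q - 1) * ∑ k ∈ Finset.Icc s (s + n), B k
          < (q - 1) * (q ^ (s + n) * q / (q - 1)) :=
            mul_lt_mul_of_pos_left hsumlt (by linarith)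
      _ = q ^ (s + n) * q := by
            rw [mul_div_assoc']
            exact mul_div_cancel_left₀ _ (ne_of_gt (by linarith : (0:ℝ) < q - 1))
    have h1q : Real.exp (β 1) ≤ q := Real.exp_le_exp.2 (mono _ 1 le_rfl hsn1)
    have hqlim : q ≤ Real.exp βlim := Real.exp_le_exp.2 (hle _ hsn1)
    have hcmp : (Real.exp (β 1) - 1) / Real.exp βlim ≤ (q - 1) / q :=
      div_le_div₀ (by linarith) (by linarith) hq0 hqlim
    linarith
  refine ⟨hc, main, ?_⟩
  intro H
  obtain ⟨N, hN⟩ := H _ hc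
  have h1' := hN N le_rfl 1 le_rfl
  have h2' := main 1 le_rfl N
  linarith
end

section
/- If β_k := (log B_k)/k is positive, nondecreasing and tends to infinity, then there exists s₀ such that for all s ≥ s₀ and all n ≥ 0, B_{s+n}/(B_s + ⋯ + B_{s+n}) > 1/2. -/
open Finset Filter Real

/-- If β_k = (log B_k)/k is positive, nondecreasing and tends to infinity, then
there exists s₀ such that for all s ≥ s₀ and all n ≥ 0,
B_{s+n}/(B_s + ⋯ + B_{s+n}) > 1/2. -/
theorem stmt5 (B β : ℕ → ℝ)
    (hB : ∀ k ≥ 1, B k = Real.exp (k * β k))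
    (hβpos : ∀ k ≥ 1, 0 < β k)
    (hβmono : ∀ k ≥ 1, β k ≤ β (k + 1))
    (hβlim : Filter.Tendsto β Filter.atTop Filter.atTop) :
    ∃ s₀ : ℕ, 1 ≤ s₀ ∧ ∀ s ≥ s₀, ∀ n : ℕ,
      B (s + n) / ∑ k ∈ Finset.Icc s (s + n), B k > 1 / 2 := by
  obtain ⟨N, hN⟩ := Filter.eventually_atTop.mp (hβlim.eventually_ge_atTop 2)
  refine ⟨max N 1, le_max_right _ _, ?_⟩
  intro s hs n
  have hs1 : 1 ≤ s := le_trans (le_max_right N 1) hs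
  have hsN : N ≤ s := le_trans (le_max_left N 1) hs
  have hBpos : ∀ k ≥ 1, 0 < B k := fun k hk => by
    rw [hB k hk]; exact Real.exp_pos _
  -- key step lemma
  have key : ∀ k ≥ s, 3 * B k ≤ B (k + 1) := by
    intro k hk
    have hk1 : 1 ≤ k := le_trans hs1 hk
    have hk1' : 1 ≤ k + 1 := le_trans hk1 (Nat.le_succ k)
    rw [hB k hk1, hB (k + 1) hk1']
    have hβ2 : 2 ≤ β (k + 1) := hN (k + 1) (le_trans hsN (le_trans hk (Nat.le_succ k)))
    have h3 : (3 : ℝ) ≤ Real.exp (β (k + 1)) := by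
      calc (3 : ℝ) ≤ Real.exp 2 := by
            have := Real.add_one_le_exp (2 : ℝ)
            linarith
        _ ≤ Real.exp (β (k + 1)) := Real.exp_le_exp.mpr hβ2
    calc 3 * Real.exp (k * β k) ≤ Real.exp (β (k + 1)) * Real.exp (k * β k) := by
          have := Real.exp_pos ((k : ℝ) * β k)
          nlinarith
      _ = Real.exp (β (k + 1) + k * β k) := (Real.exp_add _ _).symm
      _ ≤ Real.exp ((k + 1 : ℕ) * β (k + 1)) := by
          apply Real.exp_le_exp.mpr
          push_cast
          have hmono := hβmono k hk1
          have : (k : ℝ) * β k ≤ (k : ℝ) * β (k + 1) := by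
            apply mul_le_mul_of_nonneg_left hmono (by positivity)
          linarith
  -- growth lemma
  have grow : ∀ k ≥ s, ∀ m : ℕ, B k * 3 ^ m ≤ B (k + m) := by
    intro k hk m
    induction m with
    | zero => simp
    | succ m ih =>
      have h1 : 3 * B (k + m) ≤ B (k + m + 1) := key (k + m) (le_trans hk (Nat.le_add_right _ _))
      have hBk : 0 < B k := hBpos k (le_trans hs1 hk)
      calc B k * 3 ^ (m + 1) = (B k * 3 ^ m) * 3 := by ring
        _ ≤ B (k + m) * 3 := by nlinarith
        _ ≤ B (k + (m + 1)) := by rw [← Nat.add_assoc]; linarith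
  -- bound each term: B (s+i) ≤ B (s+n) * (1/3)^(n-i) for i ≤ n
  have term : ∀ i ≤ n, B (s + i) ≤ B (s + n) * (1 / 3) ^ (n - i) := by
    intro i hi
    have h := grow (s + i) (Nat.le_add_right _ _) (n - i)
    rw [show s + i + (n - i) = s + n by omega] at h
    rw [div_pow, one_pow, mul_one_div, le_div_iff₀ (by positivity)]
    linarith
  have hsum_le : ∑ k ∈ Finset.Icc s (s + n), B k ≤ B (s + n) * (3 / 2) := by
    have hre : ∑ k ∈ Finset.Icc s (s + n), B k = ∑ i ∈ Finset.range (n + 1), B (s + i) := by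
      rw [show Finset.Icc s (s + n) = Finset.Ico s (s + n + 1) by
        ext x; simp [Finset.mem_Icc, Finset.mem_Ico]]
      rw [Finset.sum_Ico_eq_sum_range, show s + n + 1 - s = n + 1 by omega]
    rw [hre]
    calc ∑ i ∈ Finset.range (n + 1), B (s + i)
        ≤ ∑ i ∈ Finset.range (n + 1), B (s + n) * (1 / 3) ^ (n - i) := by
          apply Finset.sum_le_sum
          intro i hi
          exact term i (by simp at hi; omega)
      _ = B (s + n) * ∑ i ∈ Finset.range (n + 1), (1 / 3 : ℝ) ^ (n - i) := by
          rw [Finset.mul_sum]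
      _ = B (s + n) * ∑ j ∈ Finset.range (n + 1), (1 / 3 : ℝ) ^ j := by
          congr 1
          rw [← Finset.sum_range_reflect]
          apply Finset.sum_congr rfl
          intro j hj
          simp at hj
          congr 1
          omega
      _ ≤ B (s + n) * (3 / 2) := by
          apply mul_le_mul_of_nonneg_left _ (le_of_lt (hBpos _ (by omega)))
          have hp : (0:ℝ) ≤ (1/3 : ℝ) ^ (n + 1) := by positivity
          rw [geom_sum_eq (show (1/3:ℝ) ≠ 1 by norm_num) (n + 1),
            div_le_iff_of_neg (by norm_num : (1/3:ℝ) - 1 < 0)]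
          linarith
  have hsum_pos : 0 < ∑ k ∈ Finset.Icc s (s + n), B k := by
    apply Finset.sum_pos
    · intro k hk
      simp [Finset.mem_Icc] at hk
      exact hBpos k (by omega)
    · exact ⟨s, by simp [Finset.mem_Icc]⟩
  rw [gt_iff_lt, lt_div_iff₀ hsum_pos]
  have hBn : 0 < B (s + n) := hBpos _ (by omega)
  nlinarith
end

section
/- If β_k := (log B_k)/k is positive, nonincreasing and tends to 0, then for all large s and all n, B_{s+n}/(B_s + ⋯ + B_{s+n}) ≤ max{4/(n+1), 4·β_{s+n}}; consequently B_{s+n}/(B_s+⋯+B_{s+n}) → 0 as n → ∞ uniformly in s, i.e. condition (Y) holds. -/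
open Finset Filter Real

lemma exp_sub_one_le' (x : ℝ) (hx0 : 0 ≤ x) (hx : x ≤ 1/2) :
    Real.exp x - 1 ≤ 2 * x := by
  have h1 : 1 - x ≤ Real.exp (-x) := by
    have := Real.add_one_le_exp (-x); linarith
  have h2 : Real.exp x * (1 - x) ≤ 1 := by
    have := mul_le_mul_of_nonneg_left h1 (Real.exp_pos x).le
    rwa [← Real.exp_add, add_neg_cancel, Real.exp_zero] at this
  nlinarith [Real.exp_pos x]

lemma core (x : ℝ) (n : ℕ) (hx0 : 0 < x) (hx : x ≤ 1/2) :
    (Real.exp x)^n / ∑ j ∈ Finset.range (n+1), (Real.exp x)^j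
      ≤ max (4 / ((n : ℝ) + 1)) (4 * x) := by
  set b := Real.exp x with hb
  have hb1 : 1 < b := Real.one_lt_exp_iff.mpr hx0
  have hb0 : 0 < b := lt_trans one_pos hb1
  have hT : (0:ℝ) < ∑ j ∈ Finset.range (n+1), b^j := by
    apply Finset.sum_pos (fun j _ => pow_pos hb0 j)
    exact Finset.nonempty_range_add_one
  rcases le_or_gt 1 ((n+1 : ℝ) * x) with hcase | hcase
  · -- case 1 : bound by 4x
    apply le_max_of_le_right
    have hgeom : ∑ j ∈ Finset.range (n+1), b^j = (b^(n+1) - 1)/(b - 1) := by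
      rw [geom_sum_eq (ne_of_gt hb1)]
    have hbn1 : (2:ℝ) ≤ b^(n+1) := by
      rw [hb, ← Real.exp_nat_mul]
      calc (2:ℝ) ≤ Real.exp 1 := by
            have := Real.add_one_le_exp (1:ℝ); linarith
        _ ≤ Real.exp ((n+1) * x) := Real.exp_le_exp.mpr (by push_cast; linarith)
        _ = Real.exp ((↑(n+1):ℝ) * x) := by push_cast; ring_nf
    have hden : b^(n+1)/2 ≤ b^(n+1) - 1 := by linarith
    have h1 : b^n / ∑ j ∈ Finset.range (n+1), b^j ≤ b^n * (b-1)/(b^(n+1)/2) := by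
      rw [hgeom, div_div_eq_mul_div]
      apply div_le_div_of_nonneg_left _ (div_pos (pow_pos hb0 _) two_pos) hden
      exact mul_nonneg (pow_nonneg hb0.le n) (by linarith)
    calc b^n / ∑ j ∈ Finset.range (n+1), b^j ≤ b^n * (b-1)/(b^(n+1)/2) := h1
      _ = 2 * (b-1)/b := by
          rw [pow_succ]; field_simp
      _ ≤ 2 * (b-1) := by
          apply div_le_self (by linarith) (by linarith)
      _ ≤ 4 * x := by
          have := exp_sub_one_le' x hx0.le hx
          rw [← hb] at this; linarith
  · -- case 2 : bound by 4/(n+1)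
    apply le_max_of_le_left
    set m := n/2 + 1 with hm
    have hm1 : 1 ≤ m := Nat.le_add_left 1 (n/2)
    have hmn : m ≤ n + 1 := by omega
    have key : (m : ℝ) * b^(n+1-m) ≤ ∑ j ∈ Finset.range (n+1), b^j := by
      calc (m:ℝ) * b^(n+1-m) = ∑ j ∈ Finset.Icc (n+1-m) n, b^(n+1-m) := by
            rw [Finset.sum_const, Nat.card_Icc]
            have : n + 1 - (n+1-m) = m := by omega
            rw [this, nsmul_eq_mul]
        _ ≤ ∑ j ∈ Finset.Icc (n+1-m) n, b^j := by
            apply Finset.sum_le_sum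
            intro j hj
            exact pow_le_pow_right₀ hb1.le (Finset.mem_Icc.mp hj).1
        _ ≤ ∑ j ∈ Finset.range (n+1), b^j := by
            apply Finset.sum_le_sum_of_subset_of_nonneg
            · intro j hj
              simp only [Finset.mem_Icc] at hj
              simp only [Finset.mem_range]; omega
            · intro j _ _; positivity
    have hmb : (0:ℝ) < (m:ℝ) * b^(n+1-m) := by positivity
    have h1 : b^n / ∑ j ∈ Finset.range (n+1), b^j ≤ b^n / ((m:ℝ) * b^(n+1-m)) :=
      div_le_div_of_nonneg_left (by positivity) hmb key
    have hsplit : b^n = b^(n+1-m) * b^(m-1) := by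
      rw [← pow_add]; congr 1; omega
    have h2 : b^n / ((m:ℝ) * b^(n+1-m)) = b^(m-1) / m := by
      rw [hsplit]; field_simp
    have hbm : b^(m-1) ≤ 2 := by
      rw [hb, ← Real.exp_nat_mul]
      have : ((m-1 : ℕ) : ℝ) * x ≤ 1/2 := by
        have hmn' : ((m-1:ℕ):ℝ) * 2 ≤ (n:ℝ) := by
          have : (m-1) * 2 ≤ n := by omega
          exact_mod_cast this
        nlinarith [hx0]
      calc Real.exp ((m-1:ℕ) * x) ≤ Real.exp (1/2) := Real.exp_le_exp.mpr this
        _ ≤ 2 := by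
            have he : Real.exp (1/2) ^ (2:ℕ) = Real.exp 1 := by
              rw [← Real.exp_nat_mul]; norm_num
            nlinarith [Real.exp_pos (1/2), Real.exp_one_lt_d9]
    have hfin : b^(m-1)/(m:ℝ) ≤ 4/((n:ℝ)+1) := by
      rw [div_le_div_iff₀ (by exact_mod_cast hm1) (by positivity)]
      have hmhalf : ((n:ℝ)+1)/2 ≤ (m:ℝ) := by
        have : n + 1 ≤ 2 * m := by omega
        have := (Nat.cast_le (α := ℝ)).mpr this
        push_cast at this ⊢; linarith
      nlinarith [hbm, hmhalf]
    calc b^n / ∑ j ∈ Finset.range (n+1), b^j ≤ b^n / ((m:ℝ)*b^(n+1-m)) := h1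
      _ = b^(m-1)/m := h2
      _ ≤ 4/((n:ℝ)+1) := hfin

lemma beta_anti (β : ℕ → ℝ) (hβmono : ∀ k ≥ 1, β (k + 1) ≤ β k) :
    ∀ a ≥ 1, ∀ c, a ≤ c → β c ≤ β a := by
  intro a ha c hac
  induction c, hac using Nat.le_induction with
  | base => exact le_refl _
  | succ c hc ih => exact le_trans (hβmono c (le_trans ha hc)) ih


/-- If β_k = (log B_k)/k is positive, nonincreasing and tends to 0, then for all
large s and all n, B_{s+n}/(B_s + ⋯ + B_{s+n}) ≤ max{4/(n+1), 4·β_{s+n}};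
consequently the ratio tends to 0 as n → ∞ uniformly in s, i.e. (Y) holds. -/
theorem stmt6 (B β : ℕ → ℝ)
    (hB : ∀ k ≥ 1, B k = Real.exp (k * β k))
    (hβpos : ∀ k ≥ 1, 0 < β k)
    (hβmono : ∀ k ≥ 1, β (k + 1) ≤ β k)
    (hβlim : Filter.Tendsto β Filter.atTop (nhds 0)) :
    ∃ s₀ : ℕ, 1 ≤ s₀ ∧
      (∀ s ≥ s₀, ∀ n : ℕ,
        B (s + n) / ∑ k ∈ Finset.Icc s (s + n), B k
          ≤ max (4 / ((n : ℝ) + 1)) (4 * β (s + n))) ∧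
      (∀ ε : ℝ, 0 < ε → ∃ N : ℕ, ∀ n ≥ N, ∀ s ≥ s₀,
        B (s + n) / ∑ k ∈ Finset.Icc s (s + n), B k < ε) := by
  have anti := beta_anti β hβmono
  obtain ⟨s₁, hs₁⟩ := (Filter.eventually_atTop).mp
    (hβlim.eventually_lt_const (by norm_num : (0:ℝ) < 1/2))
  have hbound : ∀ s ≥ max s₁ 1, ∀ n : ℕ,
      B (s + n) / ∑ k ∈ Finset.Icc s (s + n), B k
        ≤ max (4 / ((n : ℝ) + 1)) (4 * β (s + n)) := by
    intro s hs n
    have hs1 : 1 ≤ s := le_trans (le_max_right _ _) hs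
    have hsn1 : 1 ≤ s + n := le_trans hs1 (Nat.le_add_right _ _)
    set x := β (s + n) with hx
    have hx0 : 0 < x := hβpos _ hsn1
    have hxh : x ≤ 1/2 := (hs₁ (s+n) (le_trans (le_trans (le_max_left _ _) hs) (Nat.le_add_right _ _))).le
    set b := Real.exp x with hb
    have hb0 : (0:ℝ) < b := Real.exp_pos x
    have hb1 : 1 < b := Real.one_lt_exp_iff.mpr hx0
    set T := ∑ j ∈ Finset.range (n+1), b^j with hT
    have hT0 : 0 < T := Finset.sum_pos (fun j _ => pow_pos hb0 j) Finset.nonempty_range_add_one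
    have hBsn : B (s+n) = b^(s+n) := by
      rw [hB _ hsn1, hb, ← Real.exp_nat_mul]
    have hlow : ∀ k ∈ Finset.Icc s (s+n), b^k ≤ B k := by
      intro k hk
      obtain ⟨hk1, hk2⟩ := Finset.mem_Icc.mp hk
      have hk1' : 1 ≤ k := le_trans hs1 hk1
      rw [hB _ hk1', hb, ← Real.exp_nat_mul]
      apply Real.exp_le_exp.mpr
      have : x ≤ β k := anti k hk1' (s+n) hk2
      have hkR : (0:ℝ) ≤ (k:ℝ) := Nat.cast_nonneg k
      nlinarith
    have hsum : b^s * T ≤ ∑ k ∈ Finset.Icc s (s+n), B k := by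
      calc b^s * T = ∑ j ∈ Finset.range (n+1), b^(s+j) := by
            rw [Finset.mul_sum]
            exact Finset.sum_congr rfl (fun j _ => by rw [pow_add])
        _ = ∑ k ∈ Finset.Icc s (s+n), b^k := by
            rw [← Finset.Ico_add_one_right_eq_Icc, Finset.sum_Ico_eq_sum_range]
            apply Finset.sum_congr _ (fun j _ => rfl)
            congr 1; omega
        _ ≤ _ := Finset.sum_le_sum hlow
    have hS0 : 0 < ∑ k ∈ Finset.Icc s (s+n), B k := lt_of_lt_of_le (by positivity) hsum
    calc B (s+n) / ∑ k ∈ Finset.Icc s (s+n), B k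
        ≤ b^(s+n) / (b^s * T) := by
          rw [hBsn]
          exact div_le_div_of_nonneg_left (pow_nonneg hb0.le _) (by positivity) hsum
      _ = b^n / T := by rw [pow_add]; field_simp
      _ ≤ max (4 / ((n : ℝ) + 1)) (4 * x) := core x n hx0 hxh
  refine ⟨max s₁ 1, le_max_right _ _, hbound, ?_⟩
  intro ε hε
  obtain ⟨N₁, hN₁⟩ := (Filter.eventually_atTop).mp
    (hβlim.eventually_lt_const (by positivity : (0:ℝ) < ε/4))
  obtain ⟨N₂, hN₂⟩ := exists_nat_gt (4/ε)
  refine ⟨max N₁ N₂, fun n hn s hs => ?_⟩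
  refine lt_of_le_of_lt (hbound s hs n) (max_lt ?_ ?_)
  · have hn2 : (N₂ : ℝ) ≤ n := Nat.cast_le.mpr (le_trans (le_max_right _ _) hn)
    have h4 : 4/ε < (n:ℝ) + 1 := by linarith
    rw [div_lt_iff₀ (by linarith [Nat.cast_nonneg (α := ℝ) n])]
    rw [div_lt_iff₀ hε] at h4
    linarith
  · have : β (s + n) < ε/4 := hN₁ (s+n) (le_trans (le_trans (le_max_left _ _) hn) (Nat.le_add_left _ _))
    linarith
end

section
/- For b = exp(β) with 0 < β < 1 and any n ≥ 1: if b^n < 2 then b^{n+1} - 1 > (n+1)β, and since e^β - 1 < 2β, it follows that b^n(b-1)/(b^{n+1}-1) ≤ 4/(n+1); if b^n ≥ 2 then b^n < 2(b^{n+1}-1) and b^n(b-1)/(b^{n+1}-1) ≤ 4β. -/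
open Real

/-- For b = e^β with 0 < β < 1 and n ≥ 1: e^β - 1 < 2β; if b^n < 2 then
b^{n+1} - 1 > (n+1)β and b^n(b-1)/(b^{n+1}-1) ≤ 4/(n+1); if b^n ≥ 2 then
b^n < 2(b^{n+1}-1) and b^n(b-1)/(b^{n+1}-1) ≤ 4β. -/
theorem stmt7 (β : ℝ) (hβ0 : 0 < β) (hβ1 : β < 1) (b : ℝ) (hb : b = Real.exp β)
    (n : ℕ) (hn : 1 ≤ n) :
    b - 1 < 2 * β ∧
    (b ^ n < 2 →
      b ^ (n + 1) - 1 > (n + 1) * β ∧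
      b ^ n * (b - 1) / (b ^ (n + 1) - 1) ≤ 4 / (n + 1)) ∧
    (2 ≤ b ^ n →
      b ^ n < 2 * (b ^ (n + 1) - 1) ∧
      b ^ n * (b - 1) / (b ^ (n + 1) - 1) ≤ 4 * β) := by
  have hkey : b - 1 < 2 * β := by
    have h := Real.exp_bound' hβ0.le hβ1.le (n := 2) (by norm_num)
    simp [Finset.sum_range_succ, Nat.factorial] at h
    nlinarith [sq_nonneg β]
  have hb1 : 1 < b := by
    rw [hb]; nlinarith [Real.add_one_lt_exp hβ0.ne']
  have hbn : (0:ℝ) < b ^ n := by positivity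
  have hpow : b ^ (n + 1) = Real.exp ((n + 1) * β) := by
    rw [hb, ← Real.exp_nat_mul]
    push_cast; ring_nf
  have hgt : b ^ (n + 1) - 1 > (n + 1) * β := by
    rw [hpow]
    have := Real.add_one_lt_exp (x := (n + 1) * β) (by positivity : ((n:ℝ)+1)*β ≠ 0)
    · linarith
  have hn1 : (0:ℝ) < (n:ℝ) + 1 := by positivity
  have hD : (0:ℝ) < b ^ (n + 1) - 1 := lt_trans (by positivity) hgt
  refine ⟨hkey, fun h2 => ⟨hgt, ?_⟩, fun h2 => ?_⟩
  · rw [div_le_div_iff₀ hD hn1]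
    have h1 : b ^ n * (b - 1) ≤ 4 * β := by nlinarith
    nlinarith
  · have hlt : b ^ n < 2 * (b ^ (n + 1) - 1) := by
      have : b ^ (n + 1) = b * b ^ n := by ring
      nlinarith
    refine ⟨hlt, ?_⟩
    rw [div_le_iff₀ hD]
    nlinarith
end

section
/- With δ_k = (5!/(k+5)!)²·ε_1·ε_2⋯ε_j for k_j ≤ k < k_{j+1}, define B_k = 2^{-k-1}·log(1/δ_k) and A_j = log(1/(ε_1⋯ε_j)). If k_{j+1}²/A_j → 0 as j → ∞, then B_k = 2^{-k}·log((k+5)!/5!) + 2^{-k-1}·A_j for k_j ≤ k < k_{j+1}, and for all large j one has B_{k_j} + B_{k_j+1} + ⋯ + B_{k_{j+1}-1} < 3·B_{k_j}. -/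
open Finset Filter Real

set_option maxHeartbeats 1000000

/-- With δ_k = (5!/(k+5)!)²·ε_1⋯ε_j for k_j ≤ k < k_{j+1}, B_k = 2^{-k-1}log(1/δ_k)
and A_j = log(1/(ε_1⋯ε_j)): if k_{j+1}²/A_j → 0 then
B_k = 2^{-k}·log((k+5)!/5!) + 2^{-k-1}·A_j on k_j ≤ k < k_{j+1}, and for all large j,
B_{k_j} + ⋯ + B_{k_{j+1}-1} < 3·B_{k_j}. -/
theorem stmt9 (kj : ℕ → ℕ) (ε δ Bseq A : ℕ → ℝ)
    (hkjmono : ∀ j ≥ 1, kj (j + 1) - kj j < kj (j + 2) - kj (j + 1))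
    (hkjgap : Filter.Tendsto (fun j => kj (j + 1) - kj j) Filter.atTop Filter.atTop)
    (hεpos : ∀ j ≥ 1, 0 < ε j)
    (hεdec : ∀ j ≥ 1, ε (j + 1) < ε j)
    (hεlim : Filter.Tendsto ε Filter.atTop (nhds 0))
    (hδ : ∀ j ≥ 1, ∀ k, kj j ≤ k → k < kj (j + 1) →
      δ k = ((120 : ℝ) / (Nat.factorial (k + 5))) ^ 2 * ∏ i ∈ Finset.Icc 1 j, ε i)
    (hB : ∀ k, Bseq k = Real.log (1 / δ k) / 2 ^ (k + 1))
    (hA : ∀ j, A j = Real.log (1 / ∏ i ∈ Finset.Icc 1 j, ε i))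
    (hcond : Filter.Tendsto (fun j => (kj (j + 1) : ℝ) ^ 2 / A j)
      Filter.atTop (nhds 0)) :
    (∀ j ≥ 1, ∀ k, kj j ≤ k → k < kj (j + 1) →
      Bseq k = Real.log ((Nat.factorial (k + 5) : ℝ) / 120) / 2 ^ k
        + A j / 2 ^ (k + 1)) ∧
    (∃ J, ∀ j ≥ J, ∑ k ∈ Finset.Ico (kj j) (kj (j + 1)), Bseq k
      < 3 * Bseq (kj j)) := by
  have hPpos : ∀ j, 0 < ∏ i ∈ Finset.Icc 1 j, ε i := fun j =>
    Finset.prod_pos fun i hi => hεpos i (Finset.mem_Icc.mp hi).1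
  -- Part 1
  have part1 : ∀ j ≥ 1, ∀ k, kj j ≤ k → k < kj (j + 1) →
      Bseq k = Real.log ((Nat.factorial (k + 5) : ℝ) / 120) / 2 ^ k
        + A j / 2 ^ (k + 1) := by
    intro j hj k hk1 hk2
    have hF : (0:ℝ) < (Nat.factorial (k + 5) : ℝ) := by
      exact_mod_cast Nat.factorial_pos _
    have hP := hPpos j
    rw [hB, hδ j hj k hk1 hk2, hA]
    have h1 : (1:ℝ) / (((120 : ℝ) / (Nat.factorial (k + 5))) ^ 2 * ∏ i ∈ Finset.Icc 1 j, ε i)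
        = ((Nat.factorial (k + 5) : ℝ) / 120) ^ 2 * (1 / ∏ i ∈ Finset.Icc 1 j, ε i) := by
      field_simp
    rw [h1, Real.log_mul (by positivity) (by positivity), Real.log_pow, pow_succ]
    push_cast
    ring
  refine ⟨part1, ?_⟩
  -- ε is antitone on [1, ∞)
  have hanti : ∀ a, 1 ≤ a → ∀ b, a ≤ b → ε b ≤ ε a := by
    intro a ha b hab
    induction b with
    | zero => exact absurd (ha.trans hab) (by omega)
    | succ n ih =>
      rcases Nat.lt_or_ge a (n + 1) with h | h
      · have h1 : a ≤ n := by omega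
        exact le_trans (hεdec n (by omega)).le (ih h1)
      · rw [le_antisymm hab h]
  -- choose N ≥ 1 with ε N < 1
  obtain ⟨N0, hN0⟩ := Filter.eventually_atTop.mp
    (hεlim.eventually_lt_const (by norm_num : (0:ℝ) < 1))
  set N := max N0 1 with hNdef
  have hN1 : 1 ≤ N := le_max_right _ _
  have hNε : ε N < 1 := hN0 N (le_max_left _ _)
  have hNpos : 0 < ε N := hεpos N hN1
  have hlogc : Real.log (ε N) < 0 := Real.log_neg hNpos hNε
  -- log of the product is eventually very negative
  have hlogP : ∀ j, N ≤ j → Real.log (∏ i ∈ Finset.Icc 1 j, ε i) ≤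
      Real.log (∏ i ∈ Finset.Icc 1 N, ε i) + ((j - N : ℕ) : ℝ) * Real.log (ε N) := by
    intro j hj
    have hsplit : (∏ i ∈ Finset.Icc 1 j, ε i)
        = (∏ i ∈ Finset.Icc 1 N, ε i) * ∏ i ∈ Finset.Ioc N j, ε i := by
      rw [show Finset.Icc 1 j = Finset.Ioc 0 j from Finset.Icc_add_one_left_eq_Ioc 0 j,
        show Finset.Icc 1 N = Finset.Ioc 0 N from Finset.Icc_add_one_left_eq_Ioc 0 N]
      exact (Finset.prod_Ioc_consecutive ε (Nat.zero_le N) hj).symm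
    have hQpos : 0 < ∏ i ∈ Finset.Ioc N j, ε i :=
      Finset.prod_pos fun i hi => hεpos i (by have := (Finset.mem_Ioc.mp hi).1; omega)
    rw [hsplit, Real.log_mul (hPpos N).ne' hQpos.ne']
    have hlogQ : Real.log (∏ i ∈ Finset.Ioc N j, ε i) ≤ ((j - N : ℕ) : ℝ) * Real.log (ε N) := by
      rw [Real.log_prod (fun i hi => (hεpos i (by have := (Finset.mem_Ioc.mp hi).1; omega)).ne')]
      have hcard : (Finset.Ioc N j).card = j - N := Nat.card_Ioc N j
      calc ∑ i ∈ Finset.Ioc N j, Real.log (ε i)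
          ≤ ∑ _i ∈ Finset.Ioc N j, Real.log (ε N) := by
            apply Finset.sum_le_sum
            intro i hi
            have hiN : N ≤ i := (Finset.mem_Ioc.mp hi).1.le
            exact Real.log_le_log (hεpos i (by omega)) (hanti N hN1 i hiN)
        _ = ((j - N : ℕ) : ℝ) * Real.log (ε N) := by
            rw [Finset.sum_const, hcard, nsmul_eq_mul]
    linarith
  -- A j is eventually positive
  obtain ⟨n0, hn0⟩ := exists_nat_gt (Real.log (∏ i ∈ Finset.Icc 1 N, ε i) / (- Real.log (ε N)))
  have hApos : ∀ j, N + n0 ≤ j → 0 < A j := by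
    intro j hj
    have h1 := hlogP j (by omega)
    have h2 : (n0 : ℝ) ≤ ((j - N : ℕ) : ℝ) := by
      have : n0 ≤ j - N := by omega
      exact_mod_cast this
    have h3 : ((j - N : ℕ) : ℝ) * Real.log (ε N) ≤ (n0 : ℝ) * Real.log (ε N) :=
      mul_le_mul_of_nonpos_right h2 hlogc.le
    have h4 : Real.log (∏ i ∈ Finset.Icc 1 N, ε i) + (n0:ℝ) * Real.log (ε N) < 0 := by
      rw [div_lt_iff₀ (by linarith : (0:ℝ) < - Real.log (ε N))] at hn0
      nlinarith
    have h5 : Real.log (∏ i ∈ Finset.Icc 1 j, ε i) < 0 := by linarith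
    rw [hA, one_div, Real.log_inv]
    linarith
  -- eventual facts from hypotheses
  obtain ⟨J2, hJ2⟩ := Filter.eventually_atTop.mp (hkjgap.eventually_ge_atTop 1)
  obtain ⟨J3, hJ3⟩ := Filter.eventually_atTop.mp
    (hcond.eventually_lt_const (by norm_num : (0:ℝ) < 1/100))
  refine ⟨max (max (N + n0) 1) (max J2 J3), ?_⟩
  intro j hj
  have hj1 : 1 ≤ j := le_trans (le_trans (le_max_right _ _) (le_max_left _ _)) hj
  have hjA : N + n0 ≤ j := le_trans (le_trans (le_max_left _ _) (le_max_left _ _)) hj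
  have hjJ2 : J2 ≤ j := le_trans (le_trans (le_max_left _ _) (le_max_right _ _)) hj
  have hjJ3 : J3 ≤ j := le_trans (le_trans (le_max_right _ _) (le_max_right _ _)) hj
  have hA0 : 0 < A j := hApos j hjA
  have hgap : 1 ≤ kj (j + 1) - kj j := hJ2 j hjJ2
  set m := kj j with hm
  set M := kj (j + 1) with hM
  have hmM : m < M := by omega
  have hM1 : 1 ≤ M := by omega
  have hMre : (1:ℝ) ≤ (M:ℝ) := by exact_mod_cast hM1
  have hM2 : ((M:ℝ)) ^ 2 / A j < 1/100 := hJ3 j hjJ3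
  have hM2' : ((M:ℝ)) ^ 2 < A j / 100 := by
    rw [div_lt_iff₀ hA0] at hM2; linarith
  have hKey : ((M:ℝ) + 4) ^ 2 < A j / 4 := by nlinarith [sq_nonneg ((M:ℝ) - 1)]
  set C : ℝ := ((M:ℝ) + 4) ^ 2 + A j / 2 with hC
  have hCpos : 0 < C := add_pos_of_nonneg_of_pos (sq_nonneg _) (by linarith)
  -- termwise bound
  have hterm : ∀ k ∈ Finset.Ico m M,
      Real.log ((Nat.factorial (k + 5) : ℝ) / 120) / 2 ^ k + A j / 2 ^ (k + 1)
        ≤ C * (1/2 : ℝ) ^ k := by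
    intro k hk
    obtain ⟨hk1, hk2⟩ := Finset.mem_Ico.mp hk
    have hF : (0:ℝ) < (Nat.factorial (k + 5) : ℝ) := by exact_mod_cast Nat.factorial_pos _
    have h2k : (0:ℝ) < 2 ^ k := by positivity
    have hL1 : Real.log ((Nat.factorial (k + 5) : ℝ) / 120) ≤ ((M:ℝ) + 4) ^ 2 := by
      have hfle : (Nat.factorial (k + 5) : ℝ) / 120 ≤ ((k:ℝ) + 5) ^ (k + 5) := by
        have h1 : (Nat.factorial (k + 5) : ℝ) / 120 ≤ (Nat.factorial (k + 5) : ℝ) :=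
          div_le_self hF.le (by norm_num)
        have h2 : (Nat.factorial (k + 5) : ℝ) ≤ ((k:ℝ) + 5) ^ (k + 5) := by
          have := Nat.factorial_le_pow (k + 5)
          calc (Nat.factorial (k + 5) : ℝ) ≤ ((k + 5 : ℕ) : ℝ) ^ (k + 5) := by
                exact_mod_cast this
            _ = ((k:ℝ) + 5) ^ (k + 5) := by push_cast; ring
        linarith
      have hlog1 : Real.log ((Nat.factorial (k + 5) : ℝ) / 120)
          ≤ Real.log (((k:ℝ) + 5) ^ (k + 5)) :=
        Real.log_le_log (by positivity) hfle
      rw [Real.log_pow] at hlog1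
      have hlogk : Real.log ((k:ℝ) + 5) ≤ (k:ℝ) + 5 := by
        have := Real.log_le_sub_one_of_pos (by positivity : (0:ℝ) < (k:ℝ) + 5)
        linarith
      have hlogk0 : 0 ≤ Real.log ((k:ℝ) + 5) := Real.log_nonneg (by linarith [Nat.cast_nonneg (α := ℝ) k])
      have hkM : (k:ℝ) + 5 ≤ (M:ℝ) + 4 := by
        have : k + 1 ≤ M := hk2
        have : (k:ℝ) + 1 ≤ (M:ℝ) := by exact_mod_cast this
        linarith
      calc Real.log ((Nat.factorial (k + 5) : ℝ) / 120)
          ≤ ((k + 5 : ℕ) : ℝ) * Real.log ((k:ℝ) + 5) := by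
            have : ((k + 5 : ℕ) : ℝ) = (k:ℝ) + 5 := by push_cast; ring
            rw [this] at hlog1 ⊢
            exact hlog1
        _ ≤ ((M:ℝ) + 4) ^ 2 := by
            have : ((k + 5 : ℕ) : ℝ) = (k:ℝ) + 5 := by push_cast; ring
            rw [this]
            nlinarith
    have he1 : C * (1/2 : ℝ) ^ k = C / 2 ^ k := by
      rw [one_div, inv_pow, ← one_div]
      ring
    have he2 : A j / 2 ^ (k + 1) = (A j / 2) / 2 ^ k := by
      rw [pow_succ]; ring
    rw [he1, he2, ← add_div, hC]
    exact (div_le_div_iff_of_pos_right h2k).mpr (by linarith)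
  -- geometric sum
  have hgeom : ∑ k ∈ Finset.Ico m M, (1/2 : ℝ) ^ k
      = 2 * ((1/2 : ℝ) ^ m - (1/2 : ℝ) ^ M) := by
    rw [geom_sum_Ico (by norm_num : (1/2 : ℝ) ≠ 1) hmM.le]
    ring
  have hsum : ∑ k ∈ Finset.Ico m M, Bseq k
      = ∑ k ∈ Finset.Ico m M,
        (Real.log ((Nat.factorial (k + 5) : ℝ) / 120) / 2 ^ k + A j / 2 ^ (k + 1)) :=
    Finset.sum_congr rfl fun k hk => by
      obtain ⟨h1, h2⟩ := Finset.mem_Ico.mp hk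
      exact part1 j hj1 k h1 h2
  have hS1 : ∑ k ∈ Finset.Ico m M, Bseq k ≤ C * (2 * ((1/2 : ℝ) ^ m - (1/2 : ℝ) ^ M)) := by
    rw [hsum, ← hgeom, Finset.mul_sum]
    exact Finset.sum_le_sum hterm
  have hpm : (0:ℝ) < (1/2 : ℝ) ^ m := by positivity
  have hpM : (0:ℝ) < (1/2 : ℝ) ^ M := by positivity
  have hS2 : C * (2 * ((1/2 : ℝ) ^ m - (1/2 : ℝ) ^ M)) < C * (2 * (1/2 : ℝ) ^ m) := by
    apply mul_lt_mul_of_pos_left _ hCpos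
    linarith
  have hS3 : C * (2 * (1/2 : ℝ) ^ m) < (3/2) * A j * (1/2 : ℝ) ^ m := by
    have h2C : 2 * C < (3/2) * A j := by rw [hC]; linarith
    linarith [mul_lt_mul_of_pos_right h2C hpm]
  -- compare with 3 * Bseq m
  have hBm : Bseq m = Real.log ((Nat.factorial (m + 5) : ℝ) / 120) / 2 ^ m
      + A j / 2 ^ (m + 1) := part1 j hj1 m le_rfl hmM
  have hLm : 0 ≤ Real.log ((Nat.factorial (m + 5) : ℝ) / 120) := by
    apply Real.log_nonneg
    rw [le_div_iff₀ (by norm_num : (0:ℝ) < 120)]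
    have h120 : 120 ≤ Nat.factorial (m + 5) := Nat.factorial_le (by omega : 5 ≤ m + 5)
    have : (120:ℝ) ≤ (Nat.factorial (m + 5) : ℝ) := by exact_mod_cast h120
    linarith
  have h2m : (0:ℝ) < 2 ^ m := by positivity
  have hfinal : (3/2) * A j * (1/2 : ℝ) ^ m ≤ 3 * Bseq m := by
    have heq : (3/2) * A j * (1/2 : ℝ) ^ m = 3 * (A j / 2 ^ (m + 1)) := by
      rw [one_div, inv_pow, pow_succ]
      field_simp
    rw [heq, hBm]
    have : 0 ≤ Real.log ((Nat.factorial (m + 5) : ℝ) / 120) / 2 ^ m :=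
      div_nonneg hLm h2m.le
    linarith
  calc ∑ k ∈ Finset.Ico m M, Bseq k
      ≤ C * (2 * ((1/2 : ℝ) ^ m - (1/2 : ℝ) ^ M)) := hS1
    _ < C * (2 * (1/2 : ℝ) ^ m) := hS2
    _ < (3/2) * A j * (1/2 : ℝ) ^ m := hS3
    _ ≤ 3 * Bseq m := hfinal
end

section
/- Let h_2 = 2^{-η_2} be the dimension function of K(γ) built from δ_k with log(1/δ_k) = 2·log((k+5)!/5!) + A_j for k_j ≤ k < k_{j+1}, where A_j = 2^{k_j}·2^{-j} and 2^{-k_j}·2^j·k_{j+1}² → 0. Then η_2(t) - η_0(t) → ∞ as t → 0, where η_0(t) = (log log(1/t))/log 2; equivalently h_2(t) = o(h_0(t)) with h_0(t) = (log(1/t))^{-1}. -/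
open Real Set Filter

/-- With δ_k given by log(1/δ_k) = 2log((k+5)!/5!) + A_j for k_j ≤ k < k_{j+1},
A_j = 2^{k_j}·2^{-j}, and 2^{-k_j}·2^j·k_{j+1}² → 0, the dimension function
η₂ of K(γ) satisfies η₂(t) - η₀(t) → ∞ as t → 0⁺, where
η₀(t) = log log(1/t)/log 2; equivalently h₂ = 2^{-η₂} = o(h₀). -/
theorem stmt12 (kj : ℕ → ℕ) (hkjmono : StrictMono kj) (hkj1 : 1 ≤ kj 1)
    (A : ℕ → ℝ) (δ : ℕ → ℝ) (η₂ : ℝ → ℝ)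
    (hA : ∀ j, A j = (2 : ℝ) ^ kj j / 2 ^ j)
    (hδpos : ∀ k, 0 < δ k) (hδdec : ∀ k, δ (k + 1) < δ k) (hδ0 : δ 0 = 1)
    (hδ : ∀ j ≥ 1, ∀ k, kj j ≤ k → k < kj (j + 1) →
      Real.log (1 / δ k) = 2 * Real.log ((Nat.factorial (k + 5) : ℝ) / 120) + A j)
    (hη_node : ∀ k : ℕ, η₂ (δ k) = k)
    (hη_aff : ∀ k : ℕ, ∀ t : ℝ, δ (k + 1) < t → t < δ k →
      η₂ t = k + Real.log (δ k / t) / Real.log (δ k / δ (k + 1)))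
    (hcond : Filter.Tendsto
      (fun j => (2 : ℝ) ^ j * (kj (j + 1) : ℝ) ^ 2 / 2 ^ kj j)
      Filter.atTop (nhds 0)) :
    Filter.Tendsto (fun t => η₂ t - Real.log (Real.log (1 / t)) / Real.log 2)
      (nhdsWithin 0 (Set.Ioi 0)) Filter.atTop := by
  classical
  have hδanti : StrictAnti δ := strictAnti_nat_of_succ_lt hδdec
  have hApos : ∀ j, 0 < A j := fun j => by rw [hA]; positivity
  have hlogA : ∀ j, Real.log (A j) = ((kj j : ℝ) - j) * Real.log 2 := by
    intro j
    rw [hA, Real.log_div (by positivity) (by positivity), Real.log_pow, Real.log_pow]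
    ring
  have hfacpos : ∀ m : ℕ, (0 : ℝ) < (Nat.factorial m : ℝ) / 120 := by
    intro m
    have := Nat.factorial_pos m
    positivity
  -- log((m+5)!/120) ≤ (m+6)^2
  have hfac_log : ∀ m : ℕ, Real.log ((Nat.factorial (m + 5) : ℝ) / 120) ≤ ((m : ℝ) + 6) ^ 2 := by
    intro m
    have h1 : ((Nat.factorial (m + 5) : ℝ) / 120) ≤ ((m + 5 : ℕ) : ℝ) ^ (m + 5) := by
      have hle : (Nat.factorial (m + 5) : ℝ) ≤ ((m + 5 : ℕ) : ℝ) ^ (m + 5) := by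
        exact_mod_cast Nat.cast_le.mpr (Nat.factorial_le_pow (m + 5))
      have h0 : (0 : ℝ) ≤ (Nat.factorial (m + 5) : ℝ) := by positivity
      calc ((Nat.factorial (m + 5) : ℝ) / 120) ≤ (Nat.factorial (m + 5) : ℝ) := by
            apply div_le_self h0; norm_num
        _ ≤ _ := hle
    have h2 := Real.log_le_log (hfacpos (m + 5)) h1
    have h3 : Real.log (((m + 5 : ℕ) : ℝ) ^ (m + 5)) = ((m + 5 : ℕ) : ℝ) * Real.log ((m + 5 : ℕ) : ℝ) := by
      rw [Real.log_pow]
    have h4 : Real.log (((m + 5 : ℕ) : ℝ)) ≤ ((m : ℝ) + 5) := by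
      have := Real.log_le_self (show (0 : ℝ) ≤ ((m + 5 : ℕ) : ℝ) by positivity)
      push_cast at this ⊢
      linarith
    have h5 : ((m + 5 : ℕ) : ℝ) = (m : ℝ) + 5 := by push_cast; ring
    have hm0 : (0 : ℝ) ≤ (m : ℝ) := Nat.cast_nonneg m
    have hlognn : 0 ≤ Real.log (((m + 5 : ℕ) : ℝ)) := by
      apply Real.log_nonneg; rw [h5]; linarith
    nlinarith [h2, h3, h4]
  -- every k ≥ kj 1 lies in a block
  have hblock : ∀ k, kj 1 ≤ k → ∃ j, 1 ≤ j ∧ kj j ≤ k ∧ k < kj (j + 1) := by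
    intro k hk
    set j := Nat.findGreatest (fun j => kj j ≤ k) k with hjdef
    have h1k : 1 ≤ k := le_trans hkj1 hk
    have hPj : kj j ≤ k := Nat.findGreatest_spec (P := fun j => kj j ≤ k) (n := k) h1k hk
    have hj1 : 1 ≤ j := Nat.le_findGreatest (P := fun j => kj j ≤ k) h1k hk
    refine ⟨j, hj1, hPj, ?_⟩
    by_contra hcon
    push_neg at hcon
    have hj1k : j + 1 ≤ k := le_trans hkjmono.le_apply hcon
    exact Nat.findGreatest_is_greatest (Nat.lt_succ_self j) hj1k hcon
  -- δ values get arbitrarily small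
  have hδsmall : ∀ t : ℝ, 0 < t → ∃ K, δ K < t := by
    intro t ht
    set j := ⌈1/t⌉₊ + 1 with hjdef
    have hj1 : 1 ≤ j := Nat.le_add_left 1 _
    set K := kj j with hKdef
    have hKblock : Real.log (1 / δ K) =
        2 * Real.log ((Nat.factorial (K + 5) : ℝ) / 120) + A j :=
      hδ j hj1 K le_rfl (hkjmono (Nat.lt_succ_self j))
    have hfge : ((K : ℝ) + 5) ≤ (Nat.factorial (K + 5) : ℝ) / 120 := by
      have hn : 120 * (K + 5) ≤ Nat.factorial (K + 5) := by
        have h1 : 120 ≤ Nat.factorial (K + 4) := by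
          have h2 : Nat.factorial 5 ≤ Nat.factorial (K + 4) := by
            apply Nat.factorial_le
            have : 1 ≤ K := le_trans hj1 hkjmono.le_apply
            omega
          simpa [Nat.factorial] using h2
        calc 120 * (K + 5) ≤ Nat.factorial (K + 4) * (K + 5) :=
              Nat.mul_le_mul_right _ h1
          _ = Nat.factorial (K + 5) := by
              rw [Nat.factorial_succ (K + 4)]; ring
      rw [le_div_iff₀ (by norm_num : (0:ℝ) < 120)]
      have := (Nat.cast_le (α := ℝ)).mpr hn
      push_cast at this ⊢
      linarith
    have hlogge : Real.log (((K : ℝ) + 5) ^ 2) ≤ Real.log (1 / δ K) := by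
      rw [hKblock]
      have h1 : Real.log (((K : ℝ) + 5) ^ 2) = 2 * Real.log ((K : ℝ) + 5) := by
        rw [Real.log_pow]
        push_cast; ring
      rw [h1]
      have h2 : Real.log ((K : ℝ) + 5) ≤ Real.log ((Nat.factorial (K + 5) : ℝ) / 120) :=
        Real.log_le_log (by positivity) hfge
      linarith [hApos j]
    have hKs : ((K : ℝ) + 5) ^ 2 ≤ 1 / δ K := by
      have h0 : (0 : ℝ) < ((K : ℝ) + 5) ^ 2 := by positivity
      exact (Real.log_le_log_iff h0 (one_div_pos.mpr (hδpos K))).mp hlogge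
    have hKbig : 1 / t < ((K : ℝ) + 5) ^ 2 := by
      have h1 : (1 / t : ℝ) ≤ ⌈1/t⌉₊ := Nat.le_ceil _
      have h2 : (⌈1/t⌉₊ : ℝ) < (j : ℝ) := by
        rw [hjdef]; push_cast; linarith
      have h3 : (j : ℝ) ≤ (K : ℝ) := by exact_mod_cast hkjmono.le_apply
      nlinarith [sq_nonneg ((K : ℝ) + 4)]
    exact ⟨K, (one_div_lt_one_div ht (hδpos K)).mp (lt_of_lt_of_le hKbig hKs)⟩
  rw [tendsto_atTop]
  intro M
  have h72 : ∀ᶠ j in atTop, (2 : ℝ) ^ j * (kj (j + 1) : ℝ) ^ 2 / 2 ^ kj j < 1 / 72 :=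
    hcond.eventually (gt_mem_nhds (by norm_num))
  obtain ⟨J₀, hJ₀⟩ := eventually_atTop.mp h72
  set J := max J₀ (⌈M⌉₊ + 3) with hJdef
  have hJ1 : 1 ≤ J := le_trans (by norm_num) (le_max_right _ _)
  have hkjJ1 : 1 ≤ kj J := le_trans hJ1 hkjmono.le_apply
  have hδJlt1 : δ (kj J) < 1 := by
    calc δ (kj J) ≤ δ 1 := hδanti.antitone hkjJ1
      _ < δ 0 := hδdec 0
      _ = 1 := hδ0
  filter_upwards [Ioo_mem_nhdsGT_of_mem
    (show (0:ℝ) ∈ Ico (0:ℝ) (δ (kj J)) from ⟨le_refl 0, hδpos _⟩)] with t ht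
  obtain ⟨ht0, htJ⟩ := ht
  obtain ⟨K, hK⟩ := hδsmall t ht0
  have hKJ : kj J ≤ K := by
    by_contra h
    push_neg at h
    have := hδanti h
    linarith
  set k := Nat.findGreatest (fun m => t ≤ δ m) K with hkdef
  have hPk : t ≤ δ k := Nat.findGreatest_spec (P := fun m => t ≤ δ m) (n := K) hKJ htJ.le
  have hkJ : kj J ≤ k := Nat.le_findGreatest hKJ htJ.le
  have hkK : k < K := by
    rcases lt_or_eq_of_le (Nat.findGreatest_le (P := fun m => t ≤ δ m) K) with h | h
    · exact h
    · exfalso; rw [← hkdef] at h; rw [h] at hPk; linarith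
  have hnext : δ (k + 1) < t := by
    have h := Nat.findGreatest_is_greatest (P := fun m => t ≤ δ m) (n := K)
      (Nat.lt_succ_self k) hkK
    simp only [not_le] at h
    exact h
  obtain ⟨j, hj1, hjk, hjk'⟩ := hblock k (le_trans (hkjmono.monotone hJ1) hkJ)
  have hJj : J ≤ j := by
    have h1 : kj J < kj (j + 1) := lt_of_le_of_lt hkJ hjk'
    have h2 := hkjmono.lt_iff_lt.mp h1
    omega
  have hA72 : 72 * ((kj (j + 1) : ℝ)) ^ 2 ≤ A j := by
    have h := hJ₀ j (le_trans (le_max_left _ _) hJj)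
    rw [div_lt_div_iff₀ (by positivity) (by norm_num)] at h
    rw [hA, le_div_iff₀ (by positivity)]
    nlinarith [h]
  have hkj2 : 2 ≤ kj (j + 1) := le_trans (by omega) hkjmono.le_apply
  have hfacb : 2 * Real.log ((Nat.factorial (k + 1 + 5) : ℝ) / 120) ≤
      72 * ((kj (j + 1) : ℝ)) ^ 2 := by
    have h1 := hfac_log (k + 1)
    have h2 : ((k : ℝ) + 1) + 6 ≤ 6 * (kj (j + 1) : ℝ) := by
      have hk1 : (k : ℝ) + 1 ≤ (kj (j + 1) : ℝ) := by exact_mod_cast Nat.succ_le_of_lt hjk'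
      have h2' : (2 : ℝ) ≤ (kj (j + 1) : ℝ) := by exact_mod_cast hkj2
      linarith
    have h3 : (((k : ℝ) + 1) + 6) ^ 2 ≤ (6 * (kj (j + 1) : ℝ)) ^ 2 := by
      apply pow_le_pow_left₀ (by positivity) h2
    push_cast at h1
    nlinarith [h1, h3]
  have hlt1 : t < 1 := lt_trans htJ hδJlt1
  have hlogt_pos : 0 < Real.log (1 / t) := Real.log_pos ((lt_div_iff₀ ht0).mpr (by linarith))
  have hmain : ∀ j'' : ℕ,
      (j : ℝ) ≤ (j'' : ℝ) →
      ((kj j'' : ℝ)) - 1 ≤ (k : ℝ) →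
      A j ≤ A j'' →
      Real.log (1 / δ (k + 1)) = 2 * Real.log ((Nat.factorial (k + 1 + 5) : ℝ) / 120) + A j'' →
      M ≤ η₂ t - Real.log (Real.log (1 / t)) / Real.log 2 := by
    intro j'' hjj'' hkj'' hAle hδeq
    have hlog1t_le : Real.log (1 / t) ≤ 2 * A j'' := by
      have h1 : Real.log (1 / t) ≤ Real.log (1 / δ (k + 1)) := by
        apply Real.log_le_log (by positivity)
        exact one_div_le_one_div_of_le (hδpos (k + 1)) hnext.le
      rw [hδeq] at h1
      linarith [hfacb, hA72, hAle]
    have hloglog : Real.log (Real.log (1 / t)) ≤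
        Real.log 2 + ((kj j'' : ℝ) - j'') * Real.log 2 := by
      have h1 : Real.log (Real.log (1 / t)) ≤ Real.log (2 * A j'') :=
        Real.log_le_log hlogt_pos hlog1t_le
      rw [Real.log_mul (by norm_num) (ne_of_gt (hApos j'')), hlogA j''] at h1
      exact h1
    have hlog2 : (0 : ℝ) < Real.log 2 := Real.log_pos (by norm_num)
    have hη₀ : Real.log (Real.log (1 / t)) / Real.log 2 ≤ 1 + ((kj j'' : ℝ) - j'') := by
      rw [div_le_iff₀ hlog2]
      linarith [hloglog]
    have hη₂ : (k : ℝ) ≤ η₂ t := by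
      rcases lt_or_eq_of_le hPk with h | h
      · rw [hη_aff k t hnext h]
        have h1 : 0 ≤ Real.log (δ k / t) := Real.log_nonneg ((one_le_div ht0).mpr h.le)
        have h2 : 0 ≤ Real.log (δ k / δ (k + 1)) :=
          Real.log_nonneg ((one_le_div (hδpos (k + 1))).mpr (hδdec k).le)
        have := div_nonneg h1 h2
        linarith
      · rw [h, hη_node k]
    have hMceil : M ≤ (⌈M⌉₊ : ℝ) := Nat.le_ceil M
    have hJceil : ((⌈M⌉₊ : ℝ) + 3) ≤ (J : ℝ) := by
      have h : ⌈M⌉₊ + 3 ≤ J := le_max_right _ _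
      exact_mod_cast h
    have hJjr : (J : ℝ) ≤ (j : ℝ) := by exact_mod_cast hJj
    linarith
  have hk1le : k + 1 ≤ kj (j + 1) := Nat.succ_le_of_lt hjk'
  rcases lt_or_eq_of_le hk1le with hlt | heq
  · refine hmain j le_rfl ?_ le_rfl (hδ j hj1 (k + 1) (le_trans hjk (Nat.le_succ k)) hlt)
    have h : (kj j : ℝ) ≤ (k : ℝ) := by exact_mod_cast hjk
    linarith
  · refine hmain (j + 1) (by push_cast; linarith) ?_ ?_ ?_
    · rw [← heq]; push_cast; linarith
    · rw [hA, hA, div_le_div_iff₀ (by positivity) (by positivity), ← pow_add, ← pow_add]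
      apply pow_le_pow_right₀ (by norm_num : (1:ℝ) ≤ 2)
      have h : kj j + 1 ≤ kj (j + 1) := Nat.succ_le_of_lt (hkjmono (Nat.lt_succ_self j))
      omega
    · exact hδ (j + 1) (by omega) (k + 1) heq.ge
        (by rw [heq]; exact hkjmono (Nat.lt_succ_self (j + 1)))
end

section
/- Let α(t) = 1 - ε(t) with ε(t) ↘ 0 and ε(t)·log log(1/t) ↗ ∞ as t ↘ 0, and h(t) = (log(1/t))^{-α(t)}. Then the inverse function satisfies h^{-1}(τ) = exp(-(1/τ)^{1+δ(τ)}) where δ(τ) ↘ 0 as τ ↘ 0, and consequently (log(1/h^{-1}(2^{-k})))^{1/k} → 2 as k → ∞. -/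
open Real Set Filter Topology

/-- For α(t) = 1 - ε(t) with ε ↘ 0 and ε(t)·log log(1/t) ↗ ∞ as t ↘ 0, and
h(t) = (log(1/t))^{-α(t)}: the inverse of h satisfies
h⁻¹(τ) = exp(-(1/τ)^{1+δ(τ)}) with δ(τ) → 0 as τ ↘ 0, and consequently
(log(1/h⁻¹(2^{-k})))^{1/k} → 2 as k → ∞. -/
theorem stmt13 (t₀ : ℝ) (ht₀ : 0 < t₀) (ht₀1 : t₀ < 1)
    (ε h : ℝ → ℝ)
    (hεpos : ∀ t ∈ Set.Ioo (0 : ℝ) t₀, 0 < ε t ∧ ε t < 1)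
    (hεmono : MonotoneOn ε (Set.Ioo 0 t₀))
    (hεlim : Filter.Tendsto ε (nhdsWithin 0 (Set.Ioi 0)) (nhds 0))
    (hεlog_mono : AntitoneOn (fun t => ε t * Real.log (Real.log (1 / t))) (Set.Ioo 0 t₀))
    (hεlog : Filter.Tendsto (fun t => ε t * Real.log (Real.log (1 / t)))
      (nhdsWithin 0 (Set.Ioi 0)) Filter.atTop)
    (hh : ∀ t ∈ Set.Ioo (0 : ℝ) t₀,
      h t = Real.exp (-(1 - ε t) * Real.log (Real.log (1 / t))))
    (hhmono : StrictMonoOn h (Set.Ioo 0 t₀))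
    (g : ℝ → ℝ) (τ₀ : ℝ) (hτ₀ : 0 < τ₀)
    (hg : ∀ τ ∈ Set.Ioc (0 : ℝ) τ₀, g τ ∈ Set.Ioo (0 : ℝ) t₀ ∧ h (g τ) = τ) :
    (∃ δfun : ℝ → ℝ,
      Filter.Tendsto δfun (nhdsWithin 0 (Set.Ioi 0)) (nhds 0) ∧
      ∀ᶠ τ in nhdsWithin (0 : ℝ) (Set.Ioi 0),
        g τ = Real.exp (-((1 / τ) ^ (1 + δfun τ)))) ∧
    Filter.Tendsto
      (fun k : ℕ => (Real.log (1 / g ((2 : ℝ) ^ (-(k : ℝ))))) ^ ((k : ℝ))⁻¹)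
      Filter.atTop (nhds 2) := by
  -- eventually τ ∈ Ioc 0 τ₀
  have hgmem : ∀ᶠ τ in 𝓝[>] (0:ℝ), τ ∈ Ioc (0:ℝ) τ₀ := by
    filter_upwards [Ioo_mem_nhdsGT_of_mem (show (0:ℝ) ∈ Ico (0:ℝ) τ₀ from ⟨le_refl _, hτ₀⟩)]
      with τ hτ
    exact ⟨hτ.1, hτ.2.le⟩
  -- g τ < c eventually, for any c ∈ (0, t₀)
  have hglt : ∀ c ∈ Ioo (0:ℝ) t₀, ∀ᶠ τ in 𝓝[>] (0:ℝ), g τ < c := by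
    intro c hc
    have hhc : 0 < h c := by rw [hh c hc]; exact exp_pos _
    filter_upwards [hgmem,
      Ioo_mem_nhdsGT_of_mem (show (0:ℝ) ∈ Ico (0:ℝ) (h c) from ⟨le_refl _, hhc⟩)]
      with τ hτ hτ2
    by_contra hle
    push_neg at hle
    have h1 : h c ≤ h (g τ) := hhmono.monotoneOn hc (hg τ hτ).1 hle
    rw [(hg τ hτ).2] at h1
    exact absurd hτ2.2 (not_lt.mpr h1)
  -- g tends to 0 from the right
  have hg0 : Tendsto g (𝓝[>] (0:ℝ)) (𝓝[>] (0:ℝ)) := by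
    rw [tendsto_nhdsWithin_iff]
    constructor
    · rw [tendsto_order]
      constructor
      · intro a ha
        filter_upwards [hgmem] with τ hτ
        exact lt_trans ha (hg τ hτ).1.1
      · intro b hb
        rcases lt_or_ge b t₀ with hbt | hbt
        · exact hglt b ⟨hb, hbt⟩
        · filter_upwards [hglt (t₀/2) ⟨by linarith, by linarith⟩] with τ hτ
          linarith
    · filter_upwards [hgmem] with τ hτ
      exact (hg τ hτ).1.1
  have hεg : Tendsto (fun τ => ε (g τ)) (𝓝[>] (0:ℝ)) (𝓝 0) := hεlim.comp hg0
  -- the δ function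
  set δfun : ℝ → ℝ := fun τ => ε (g τ) / (1 - ε (g τ)) with hδdef
  have hcont : ContinuousAt (fun x : ℝ => x / (1 - x)) 0 := by
    apply ContinuousAt.div continuousAt_id (by fun_prop)
    norm_num
  have hδ : Tendsto δfun (𝓝[>] (0:ℝ)) (𝓝 0) := by
    have := hcont.tendsto.comp hεg
    simpa [hδdef, Function.comp_def] using this
  -- the formula for g
  have hformula : ∀ᶠ τ in 𝓝[>] (0:ℝ),
      g τ = Real.exp (-((1/τ) ^ (1 + δfun τ))) := by
    filter_upwards [hgmem] with τ hτ
    obtain ⟨htmem, hhτ⟩ := hg τ hτ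
    set t := g τ with hts
    have ht0 : 0 < t := htmem.1
    have ht1 : t < 1 := lt_trans htmem.2 ht₀1
    obtain ⟨hε0, hε1⟩ := hεpos t htmem
    have hτpos : 0 < τ := hτ.1
    have hlog1t : 0 < Real.log (1/t) := log_pos ((lt_div_iff₀ ht0).mpr (by linarith))
    have h1ε : (1:ℝ) - ε t ≠ 0 := by linarith
    have hL : Real.log (Real.log (1/t)) = (1 + δfun τ) * Real.log (1/τ) := by
      have hlogτ : Real.log τ = -(1 - ε t) * Real.log (Real.log (1/t)) := by
        conv_lhs => rw [← hhτ, hh t htmem]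
        rw [log_exp]
      rw [hδdef]
      simp only [← hts]
      rw [one_div τ, Real.log_inv, hlogτ]
      field_simp
      ring
    have hrpow : Real.log (1/t) = (1/τ) ^ (1 + δfun τ) := by
      rw [rpow_def_of_pos (by positivity : (0:ℝ) < 1/τ), ← exp_log hlog1t, hL, mul_comm]
    rw [← exp_log ht0]
    congr 1
    have hlt : Real.log t = - Real.log (1/t) := by rw [one_div, log_inv, neg_neg]
    rw [hlt, hrpow]
  refine ⟨⟨δfun, hδ, hformula⟩, ?_⟩
  -- second part
  set s : ℕ → ℝ := fun k => (2:ℝ) ^ (-(k:ℝ)) with hsdef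
  have hspos : ∀ k, 0 < s k := fun k => rpow_pos_of_pos two_pos _
  have hs0 : Tendsto s atTop (𝓝 0) := by
    have h1 : Tendsto (fun k : ℕ => -(k:ℝ) * Real.log 2) atTop atBot := by
      apply Tendsto.atBot_mul_const (log_pos one_lt_two)
      exact tendsto_neg_atTop_atBot.comp tendsto_natCast_atTop_atTop
    have h2 := Real.tendsto_exp_atBot.comp h1
    apply h2.congr
    intro k
    show Real.exp (-(k:ℝ) * Real.log 2) = (2:ℝ) ^ (-(k:ℝ))
    rw [rpow_def_of_pos two_pos, mul_comm]
  have hs : Tendsto s atTop (𝓝[>] (0:ℝ)) :=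
    tendsto_nhdsWithin_of_tendsto_nhds_of_eventually_within _ hs0
      (Eventually.of_forall hspos)
  have hδk : Tendsto (fun k => δfun (s k)) atTop (𝓝 0) := hδ.comp hs
  have hfk : ∀ᶠ k in atTop, g (s k) = Real.exp (-((1 / s k) ^ (1 + δfun (s k)))) :=
    hs.eventually hformula
  -- eventual identification of the target function
  have hinv : ∀ k : ℕ, 1 / s k = (2:ℝ) ^ ((k:ℝ)) := by
    intro k
    rw [hsdef]
    simp only [rpow_neg (le_of_lt two_pos), one_div, inv_inv]
  have key : ∀ᶠ k in atTop,
      (Real.log (1 / g (s k))) ^ ((k:ℝ))⁻¹ = (2:ℝ) ^ (1 + δfun (s k)) := by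
    filter_upwards [hfk, eventually_ge_atTop 1] with k hk hk1
    have hkne : ((k:ℝ)) ≠ 0 := Nat.cast_ne_zero.mpr (by omega)
    have hlog : Real.log (1 / g (s k)) = (2:ℝ) ^ ((k:ℝ) * (1 + δfun (s k))) := by
      rw [hk, one_div, ← Real.exp_neg, Real.log_exp, neg_neg, hinv k,
        ← Real.rpow_mul (le_of_lt two_pos)]
    rw [hlog, ← Real.rpow_mul (le_of_lt two_pos)]
    congr 1
    field_simp
  -- limit of 2^(1+δ) is 2
  have hlim2 : Tendsto (fun k => (2:ℝ) ^ (1 + δfun (s k))) atTop (𝓝 2) := by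
    have h1 : Tendsto (fun k => (1 + δfun (s k)) * Real.log 2) atTop (𝓝 (Real.log 2)) := by
      have := (hδk.const_add 1).mul_const (Real.log 2)
      simpa using this
    have h2 := Real.continuous_exp.continuousAt.tendsto.comp h1
    have h3 : Real.exp (Real.log 2) = 2 := Real.exp_log two_pos
    rw [h3] at h2
    apply h2.congr
    intro k
    simp only [Function.comp]
    rw [rpow_def_of_pos two_pos, mul_comm]
  exact hlim2.congr' (by filter_upwards [key] with k hk; rw [hk])
end

section
/- Let α(t) = α_0 + ε(t) with 0 < α_0 < 1, ε(t) ↘ 0, ε(t)·log log(1/t) ↗ ∞, and h = h_0^α. Then h^{-1}(τ) = exp(-(1/τ)^{1/α_0 - δ(τ)}) with δ(τ) ↘ 0, and (log(1/h^{-1}(2^{-k})))^{1/k} → 2^{1/α_0} ≠ 2 as k → ∞. -/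
open Real Set Filter

/-- For α(t) = α₀ + ε(t), 0 < α₀ < 1, ε ↘ 0, ε(t)·log log(1/t) ↗ ∞, and
h = h₀^α: the inverse satisfies h⁻¹(τ) = exp(-(1/τ)^{1/α₀ - δ(τ)}) with δ(τ) → 0,
and (log(1/h⁻¹(2^{-k})))^{1/k} → 2^{1/α₀} ≠ 2 as k → ∞. -/
theorem stmt14 (α₀ t₀ : ℝ) (hα₀ : 0 < α₀) (hα₀1 : α₀ < 1)
    (ht₀ : 0 < t₀) (ht₀1 : t₀ < 1)
    (ε h : ℝ → ℝ)
    (hεpos : ∀ t ∈ Set.Ioo (0 : ℝ) t₀, 0 < ε t ∧ ε t < 1 - α₀)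
    (hεmono : MonotoneOn ε (Set.Ioo 0 t₀))
    (hεlim : Filter.Tendsto ε (nhdsWithin 0 (Set.Ioi 0)) (nhds 0))
    (hεlog_mono : AntitoneOn (fun t => ε t * Real.log (Real.log (1 / t))) (Set.Ioo 0 t₀))
    (hεlog : Filter.Tendsto (fun t => ε t * Real.log (Real.log (1 / t)))
      (nhdsWithin 0 (Set.Ioi 0)) Filter.atTop)
    (hh : ∀ t ∈ Set.Ioo (0 : ℝ) t₀,
      h t = Real.exp (-(α₀ + ε t) * Real.log (Real.log (1 / t))))
    (hhmono : StrictMonoOn h (Set.Ioo 0 t₀))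
    (g : ℝ → ℝ) (τ₀ : ℝ) (hτ₀ : 0 < τ₀)
    (hg : ∀ τ ∈ Set.Ioc (0 : ℝ) τ₀, g τ ∈ Set.Ioo (0 : ℝ) t₀ ∧ h (g τ) = τ) :
    (∃ δfun : ℝ → ℝ,
      Filter.Tendsto δfun (nhdsWithin 0 (Set.Ioi 0)) (nhds 0) ∧
      ∀ᶠ τ in nhdsWithin (0 : ℝ) (Set.Ioi 0),
        g τ = Real.exp (-((1 / τ) ^ (1 / α₀ - δfun τ)))) ∧
    Filter.Tendsto
      (fun k : ℕ => (Real.log (1 / g ((2 : ℝ) ^ (-(k : ℝ))))) ^ ((k : ℝ))⁻¹)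
      Filter.atTop (nhds ((2 : ℝ) ^ (1 / α₀))) ∧
    (2 : ℝ) ^ (1 / α₀) ≠ 2 := by
  have hIoc : Set.Ioc (0:ℝ) τ₀ ∈ nhdsWithin (0:ℝ) (Set.Ioi 0) :=
    Ioc_mem_nhdsGT_of_mem ⟨le_refl 0, hτ₀⟩
  -- Key computation
  have key : ∀ τ ∈ Set.Ioc (0:ℝ) τ₀,
      Real.log (1 / g τ) = (1/τ) ^ (1/(α₀ + ε (g τ))) ∧
      g τ = Real.exp (-((1/τ) ^ (1/(α₀ + ε (g τ))))) := by
    intro τ hτ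
    obtain ⟨hgt, hgh⟩ := hg τ hτ
    have ht1 := hgt.1
    have ht2 := hgt.2
    have hεt := hεpos _ hgt
    set t := g τ with htdef
    have hA : 0 < α₀ + ε t := by linarith [hεt.1]
    have hlt1 : t < 1 := lt_trans ht2 ht₀1
    have hlogpos : 0 < Real.log (1 / t) :=
      Real.log_pos (by rw [lt_div_iff₀ ht1]; linarith)
    have hτpos : 0 < τ := hτ.1
    have hhh := hh t hgt
    rw [hgh] at hhh
    have hlogτ : Real.log τ = -(α₀ + ε t) * Real.log (Real.log (1/t)) := by
      rw [hhh, Real.log_exp]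
    have hL : Real.log (Real.log (1/t)) = Real.log (1/τ) * (1/(α₀ + ε t)) := by
      rw [Real.log_div one_ne_zero (ne_of_gt hτpos), Real.log_one]
      field_simp
      linarith [hlogτ]
    have h1 : Real.log (1/t) = (1/τ) ^ (1/(α₀+ε t)) := by
      rw [Real.rpow_def_of_pos (by positivity), ← hL, Real.exp_log hlogpos]
    refine ⟨h1, ?_⟩
    conv_lhs => rw [← Real.exp_log ht1]
    congr 1
    rw [← h1, Real.log_div one_ne_zero (ne_of_gt ht1), Real.log_one]
    ring
  -- g eventually in Ioo 0 t₀
  have hgpos : ∀ᶠ τ in nhdsWithin (0:ℝ) (Set.Ioi 0), g τ ∈ Set.Ioo (0:ℝ) t₀ := by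
    filter_upwards [hIoc] with τ hτ using (hg τ hτ).1
  -- g tends to 0
  have hg0 : Tendsto g (nhdsWithin (0:ℝ) (Set.Ioi 0)) (nhds 0) := by
    rw [tendsto_order]
    constructor
    · intro a ha; filter_upwards [hgpos] with τ hτ using lt_trans ha hτ.1
    · intro a ha
      set η := min a t₀ / 2 with hηdef
      have hη : η ∈ Set.Ioo (0:ℝ) t₀ := by
        constructor
        · have : 0 < min a t₀ := lt_min ha ht₀
          positivity
        · have : min a t₀ ≤ t₀ := min_le_right _ _
          linarith
      have hηa : η < a := by
        have h1 : min a t₀ ≤ a := min_le_left _ _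
        have : 0 < min a t₀ := lt_min ha ht₀
        rw [hηdef]; linarith
      have hhη : 0 < h η := by rw [hh η hη]; exact Real.exp_pos _
      filter_upwards [hIoc, Ioo_mem_nhdsGT_of_mem ⟨le_refl 0, hhη⟩] with τ hτ1 hτ2
      by_contra hcon
      push_neg at hcon
      have hηg : η ≤ g τ := le_trans hηa.le hcon
      have := hhmono.monotoneOn hη (hg τ hτ1).1 hηg
      rw [(hg τ hτ1).2] at this
      exact absurd hτ2.2 (not_lt.2 this)
  have hgW : Tendsto g (nhdsWithin (0:ℝ) (Set.Ioi 0)) (nhdsWithin (0:ℝ) (Set.Ioi 0)) :=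
    tendsto_nhdsWithin_of_tendsto_nhds_of_eventually_within _ hg0
      (hgpos.mono fun τ hτ => hτ.1)
  have hεg : Tendsto (fun τ => ε (g τ)) (nhdsWithin (0:ℝ) (Set.Ioi 0)) (nhds 0) :=
    hεlim.comp hgW
  have hAtend : Tendsto (fun τ => α₀ + ε (g τ)) (nhdsWithin (0:ℝ) (Set.Ioi 0)) (nhds α₀) := by
    simpa using tendsto_const_nhds.add hεg
  refine ⟨⟨fun τ => 1/α₀ - 1/(α₀ + ε (g τ)), ?_, ?_⟩, ?_, ?_⟩
  · have h2 := hAtend.inv₀ (ne_of_gt hα₀)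
    have := (tendsto_const_nhds : Tendsto (fun _ : ℝ => 1/α₀) (nhdsWithin (0:ℝ) (Set.Ioi 0)) (nhds (1/α₀))).sub h2
    simpa [one_div] using this
  · filter_upwards [hIoc] with τ hτ
    have := (key τ hτ).2
    simpa [sub_sub_cancel] using this
  · -- second part
    have h2k : ∀ k : ℕ, (2:ℝ) ^ (-(k:ℝ)) = ((1:ℝ)/2)^(k:ℕ) := by
      intro k
      rw [Real.rpow_neg (by norm_num), Real.rpow_natCast]
      simp [one_div, inv_pow]
    have hτk0 : Tendsto (fun k : ℕ => (2:ℝ) ^ (-(k:ℝ))) atTop (nhds 0) := by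
      simp_rw [h2k]
      exact tendsto_pow_atTop_nhds_zero_of_lt_one (by norm_num) (by norm_num)
    have hτk : Tendsto (fun k : ℕ => (2:ℝ) ^ (-(k:ℝ))) atTop (nhdsWithin (0:ℝ) (Set.Ioi 0)) :=
      tendsto_nhdsWithin_of_tendsto_nhds_of_eventually_within _ hτk0
        (Filter.Eventually.of_forall fun k => Real.rpow_pos_of_pos (by norm_num) _)
    have hAk : Tendsto (fun k : ℕ => α₀ + ε (g ((2:ℝ)^(-(k:ℝ))))) atTop (nhds α₀) :=
      hAtend.comp hτk
    have h2lim : Tendsto (fun k : ℕ => (2:ℝ)^(1/(α₀ + ε (g ((2:ℝ)^(-(k:ℝ))))))) atTop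
        (nhds ((2:ℝ)^(1/α₀))) := by
      have hexp : Tendsto (fun k : ℕ => 1/(α₀ + ε (g ((2:ℝ)^(-(k:ℝ)))))) atTop
          (nhds (1/α₀)) := by
        simpa [one_div] using hAk.inv₀ (ne_of_gt hα₀)
      exact (tendsto_const_nhds.rpow hexp (Or.inl (by norm_num)))
    have heq : ∀ᶠ k : ℕ in atTop,
        (2:ℝ)^(1/(α₀ + ε (g ((2:ℝ)^(-(k:ℝ)))))) =
        (Real.log (1 / g ((2:ℝ)^(-(k:ℝ)))))^((k:ℝ))⁻¹ := by
      filter_upwards [hτk.eventually hIoc, eventually_ge_atTop 1] with k hk hk1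
      have hkR : (k:ℝ) ≠ 0 := by
        have : (1:ℝ) ≤ (k:ℝ) := by exact_mod_cast hk1
        linarith
      have h1 := (key _ hk).1
      rw [h1]
      have hinv : 1 / (2:ℝ)^(-(k:ℝ)) = (2:ℝ)^((k:ℝ)) := by
        rw [Real.rpow_neg (by norm_num)]; simp
      rw [hinv, ← Real.rpow_mul (by norm_num), ← Real.rpow_mul (by norm_num)]
      congr 1
      have hApos : 0 < α₀ + ε (g ((2:ℝ)^(-(k:ℝ)))) := by
        have := hεpos _ (hg _ hk).1
        linarith [this.1]
      rw [mul_comm (1 / _) ((k:ℝ))⁻¹, ← mul_assoc, mul_inv_cancel₀ hkR, one_mul]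
    exact h2lim.congr' heq
  · have h1lt : (1:ℝ) < 1/α₀ := by rw [lt_div_iff₀ hα₀]; linarith
    have : (2:ℝ)^(1:ℝ) < (2:ℝ)^(1/α₀) :=
      (Real.rpow_lt_rpow_left_iff one_lt_two).2 h1lt
    rw [Real.rpow_one] at this
    exact ne_of_gt this
end
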